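/- Let s ≥ 1, T ∈ (0, ∞], and let A : [0,T) → ℝ be continuous with A(t) ≥ −(t+1)^s for all t. Let d, ρ, b, a : [0,T) → ℝ be differentiable and satisfy d' = −d²/2 + A(t)ρ² − ρ + 1, ρ' = −ρ d, b' = −b²/2 − (t+1)^s a² − a + 1, and a' = −b a on [0,T). If b(0) < d(0) and 0 < ρ(0) < a(0), then for all t ∈ [0,T): b(t) < d(t) and 0 < ρ(t) < a(t). -/

import Mathlib

open Set

private lemma key_pos (w f : ℝ → ℝ) (t₀ C : ℝ) (ht₀ : 0 < t₀)
    (hderiv : ∀ τ ∈ Icc 0 t₀, HasDerivAt w (f τ) τ)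
    (hge : ∀ τ ∈ Ioo 0 t₀, -(C * w τ) ≤ f τ)
    (h0 : 0 < w 0) : 0 < w t₀ := by
  set g : ℝ → ℝ := fun τ => w τ * Real.exp (C * τ) with hg
  have hgd : ∀ τ ∈ Icc (0:ℝ) t₀,
      HasDerivAt g ((f τ + C * w τ) * Real.exp (C * τ)) τ := by
    intro τ hτ
    have he : HasDerivAt (fun τ : ℝ => Real.exp (C * τ)) (Real.exp (C * τ) * C) τ := by
      simpa using ((hasDerivAt_id τ).const_mul C).exp
    have : HasDerivAt g (f τ * Real.exp (C * τ) + w τ * (Real.exp (C * τ) * C)) τ :=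
      (hderiv τ hτ).mul he
    convert this using 1
    ring
  have hmono : MonotoneOn g (Icc 0 t₀) := by
    apply monotoneOn_of_deriv_nonneg (convex_Icc 0 t₀)
    · exact fun τ hτ => ((hgd τ hτ).continuousAt).continuousWithinAt
    · intro τ hτ
      rw [interior_Icc] at hτ
      exact (hgd τ (Ioo_subset_Icc_self hτ)).differentiableAt.differentiableWithinAt
    · intro τ hτ
      rw [interior_Icc] at hτ
      rw [(hgd τ (Ioo_subset_Icc_self hτ)).deriv]
      have h1 := hge τ hτ
      have h2 := Real.exp_pos (C * τ)
      nlinarith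
  have h3 := hmono (left_mem_Icc.2 ht₀.le) (right_mem_Icc.2 ht₀.le) ht₀.le
  have h5 := Real.exp_pos (C * t₀)
  have h6 : w 0 ≤ w t₀ * Real.exp (C * t₀) := by simpa [hg] using h3
  nlinarith

/-- Comparison principle (Lemma 4.4 of the paper) between the Euler--Poisson
characteristic system and the auxiliary system with coefficient `−(t+1)^s`. -/
theorem comparison_principle_poly
    (s : ℝ) (hs : 1 ≤ s)
    (T : EReal) (hT : 0 < T)
    (A d ρ b a : ℝ → ℝ)
    (hAcont : ContinuousOn A {t : ℝ | 0 ≤ t ∧ (t : EReal) < T})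
    (hAlb : ∀ t : ℝ, 0 ≤ t → (t : EReal) < T → -(t + 1) ^ s ≤ A t)
    (hd : ∀ t : ℝ, 0 ≤ t → (t : EReal) < T →
      HasDerivAt d (-(d t) ^ 2 / 2 + A t * (ρ t) ^ 2 - ρ t + 1) t)
    (hρ : ∀ t : ℝ, 0 ≤ t → (t : EReal) < T →
      HasDerivAt ρ (-(ρ t) * d t) t)
    (hb : ∀ t : ℝ, 0 ≤ t → (t : EReal) < T →
      HasDerivAt b (-(b t) ^ 2 / 2 - (t + 1) ^ s * (a t) ^ 2 - a t + 1) t)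
    (ha : ∀ t : ℝ, 0 ≤ t → (t : EReal) < T →
      HasDerivAt a (-(b t) * a t) t)
    (hbd0 : b 0 < d 0) (hρ0 : 0 < ρ 0) (hρa0 : ρ 0 < a 0) :
    ∀ t : ℝ, 0 ≤ t → (t : EReal) < T →
      b t < d t ∧ 0 < ρ t ∧ ρ t < a t := by
  intro t ht htT
  by_contra hcon
  -- every point of [0, t] is in the domain
  have hmem : ∀ τ : ℝ, τ ∈ Icc (0:ℝ) t → 0 ≤ τ ∧ (τ : EReal) < T := by
    intro τ hτ
    exact ⟨hτ.1, lt_of_le_of_lt (EReal.coe_le_coe_iff.2 hτ.2) htT⟩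
  -- continuity
  have hcd : ContinuousOn d (Icc 0 t) := fun τ hτ =>
    ((hd τ (hmem τ hτ).1 (hmem τ hτ).2).continuousAt).continuousWithinAt
  have hcρ : ContinuousOn ρ (Icc 0 t) := fun τ hτ =>
    ((hρ τ (hmem τ hτ).1 (hmem τ hτ).2).continuousAt).continuousWithinAt
  have hcb : ContinuousOn b (Icc 0 t) := fun τ hτ =>
    ((hb τ (hmem τ hτ).1 (hmem τ hτ).2).continuousAt).continuousWithinAt
  have hca : ContinuousOn a (Icc 0 t) := fun τ hτ =>
    ((ha τ (hmem τ hτ).1 (hmem τ hτ).2).continuousAt).continuousWithinAt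
  set m : ℝ → ℝ := fun τ => min (min (d τ - b τ) (ρ τ)) (a τ - ρ τ) with hm
  have hcm : ContinuousOn m (Icc 0 t) := fun τ hτ =>
    ((((hcd τ hτ).sub (hcb τ hτ)).min (hcρ τ hτ)).min ((hca τ hτ).sub (hcρ τ hτ)) :
      Filter.Tendsto _ _ _)
  have hiff : ∀ τ : ℝ, (b τ < d τ ∧ 0 < ρ τ ∧ ρ τ < a τ) ↔ 0 < m τ := by
    intro τ
    simp only [hm, lt_min_iff, sub_pos]
    tauto
  set K : Set ℝ := Icc 0 t ∩ m ⁻¹' Iic 0 with hK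
  have htK : t ∈ K := by
    refine ⟨right_mem_Icc.2 ht, ?_⟩
    simp only [mem_preimage, mem_Iic]
    by_contra h
    exact hcon ((hiff t).2 (not_le.1 h))
  have hKclosed : IsClosed K := hcm.preimage_isClosed_of_isClosed isClosed_Icc isClosed_Iic
  have hKbdd : BddBelow K := ⟨0, fun x hx => hx.1.1⟩
  set t₀ := sInf K with ht₀
  have ht₀K : t₀ ∈ K := hKclosed.csInf_mem ⟨t, htK⟩ hKbdd
  have ht₀Icc : t₀ ∈ Icc (0:ℝ) t := ht₀K.1
  have ht₀bad : m t₀ ≤ 0 := ht₀K.2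
  have hbefore : ∀ τ : ℝ, τ ∈ Ico (0:ℝ) t₀ → 0 < m τ := by
    intro τ hτ
    by_contra h
    have : τ ∈ K := ⟨⟨hτ.1, hτ.2.le.trans ht₀Icc.2⟩, not_lt.1 h⟩
    exact absurd (csInf_le hKbdd this) (not_le.2 hτ.2)
  rcases eq_or_lt_of_le ht₀Icc.1 with h0 | ht₀pos
  · exact absurd ((hiff 0).1 ⟨hbd0, hρ0, hρa0⟩) (not_lt.2 (h0 ▸ ht₀bad))
  -- bound on d and b over [0, t]
  obtain ⟨C, hC⟩ := isCompact_Icc.exists_bound_of_continuousOn (hcd.prodMk hcb)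
  have hdb : ∀ τ ∈ Icc (0:ℝ) t, |d τ| ≤ C ∧ |b τ| ≤ C := by
    intro τ hτ
    have h1 := (norm_fst_le (d τ, b τ)).trans (hC τ hτ)
    have h2 := (norm_snd_le (d τ, b τ)).trans (hC τ hτ)
    simpa [Real.norm_eq_abs] using ⟨h1, h2⟩
  have hsub : Icc (0:ℝ) t₀ ⊆ Icc 0 t := Icc_subset_Icc le_rfl ht₀Icc.2
  have hsub' : Ioo (0:ℝ) t₀ ⊆ Icc 0 t := fun τ hτ => hsub ⟨hτ.1.le, hτ.2.le⟩
  -- strict inequalities on (0, t₀)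
  have hio : ∀ τ : ℝ, τ ∈ Ioo (0:ℝ) t₀ → b τ < d τ ∧ 0 < ρ τ ∧ ρ τ < a τ :=
    fun τ hτ => (hiff τ).2 (hbefore τ ⟨hτ.1.le, hτ.2⟩)
  -- 0 < ρ t₀
  have hρt₀ : 0 < ρ t₀ := by
    apply key_pos ρ (fun τ => -(ρ τ) * d τ) t₀ C ht₀pos
    · exact fun τ hτ => hρ τ (hmem τ (hsub hτ)).1 (hmem τ (hsub hτ)).2
    · intro τ hτ
      obtain ⟨_, h2, _⟩ := hio τ hτ
      have := (abs_le.1 (hdb τ (hsub' hτ)).1).2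
      nlinarith
    · exact hρ0
  -- 0 < a t₀ - ρ t₀
  have hvt₀ : 0 < a t₀ - ρ t₀ := by
    apply key_pos (fun τ => a τ - ρ τ)
      (fun τ => -(b τ) * a τ - -(ρ τ) * d τ) t₀ C ht₀pos
    · intro τ hτ
      exact (ha τ (hmem τ (hsub hτ)).1 (hmem τ (hsub hτ)).2).sub
        (hρ τ (hmem τ (hsub hτ)).1 (hmem τ (hsub hτ)).2)
    · intro τ hτ
      obtain ⟨h1, h2, h3⟩ := hio τ hτ
      have hbC := (abs_le.1 (hdb τ (hsub' hτ)).2).2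
      have k1 : 0 < ρ τ * (d τ - b τ) := mul_pos h2 (sub_pos.2 h1)
      have k2 : b τ * (a τ - ρ τ) ≤ C * (a τ - ρ τ) :=
        mul_le_mul_of_nonneg_right hbC (sub_pos.2 h3).le
      nlinarith
    · exact sub_pos.2 hρa0
  -- 0 < d t₀ - b t₀
  have hut₀ : 0 < d t₀ - b t₀ := by
    apply key_pos (fun τ => d τ - b τ)
      (fun τ => (-(d τ) ^ 2 / 2 + A τ * (ρ τ) ^ 2 - ρ τ + 1) -
        (-(b τ) ^ 2 / 2 - (τ + 1) ^ s * (a τ) ^ 2 - a τ + 1)) t₀ C ht₀pos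
    · intro τ hτ
      exact (hd τ (hmem τ (hsub hτ)).1 (hmem τ (hsub hτ)).2).sub
        (hb τ (hmem τ (hsub hτ)).1 (hmem τ (hsub hτ)).2)
    · intro τ hτ
      obtain ⟨h1, h2, h3⟩ := hio τ hτ
      have hmemτ := hmem τ (hsub' hτ)
      have hA := hAlb τ hmemτ.1 hmemτ.2
      have hP : (0:ℝ) ≤ (τ + 1) ^ s := Real.rpow_nonneg (by linarith [hτ.1]) s
      have k1 : -((τ + 1) ^ s) * (ρ τ) ^ 2 ≤ A τ * (ρ τ) ^ 2 :=
        mul_le_mul_of_nonneg_right hA (sq_nonneg _)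
      have k2 : (τ + 1) ^ s * (ρ τ) ^ 2 ≤ (τ + 1) ^ s * (a τ) ^ 2 :=
        mul_le_mul_of_nonneg_left (by nlinarith) hP
      have hdC := (abs_le.1 (hdb τ (hsub' hτ)).1).2
      have hbC := (abs_le.1 (hdb τ (hsub' hτ)).2).2
      have k3 : (d τ + b τ) * (d τ - b τ) ≤ (2 * C) * (d τ - b τ) :=
        mul_le_mul_of_nonneg_right (by linarith) (sub_pos.2 h1).le
      nlinarith
    · exact sub_pos.2 hbd0
  exact absurd ((hiff t₀).1 ⟨by linarith, hρt₀, by linarith⟩) (not_lt.2 ht₀bad)
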